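/- Uniqueness from block averages: if p and q are polynomials in two variables of degree < N = 2^n in each variable and ∫_R p = ∫_R q for every dyadic square R of side 2^{-n} in [0,1]^2, then p = q. -/

import Mathlib

open MeasureTheory Set

noncomputable def mom (N i α : ℕ) : ℝ :=
  ((((i : ℝ) + 1) / N) ^ (α + 1) - ((i : ℝ) / N) ^ (α + 1)) / ((α : ℝ) + 1)

lemma integral_pow_Icc (N i α : ℕ) (hN : 0 < N) :
    ∫ x in Set.Icc ((i : ℝ) / N) (((i : ℝ) + 1) / N), x ^ α = mom N i α := by
  have hle : (i : ℝ) / N ≤ ((i : ℝ) + 1) / N := by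
    apply div_le_div_of_nonneg_right (by linarith) (by positivity)
  rw [MeasureTheory.integral_Icc_eq_integral_Ioc,
    ← intervalIntegral.integral_of_le hle, integral_pow, mom]

lemma moment_inj (N : ℕ) (hN : 0 < N) (v : Fin N → ℝ)
    (h : ∀ i : Fin N, ∑ α : Fin N, v α * mom N (i : ℕ) (α : ℕ) = 0) : v = 0 := by
  classical
  set F : Polynomial ℝ :=
    ∑ α : Fin N, Polynomial.C (v α / ((α : ℕ) + 1)) * Polynomial.X ^ ((α : ℕ) + 1) with hF
  have heval : ∀ x : ℝ, F.eval x = ∑ α : Fin N, v α / ((α : ℕ) + 1) * x ^ ((α : ℕ) + 1) := by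
    intro x
    simp [hF, Polynomial.eval_finset_sum]
  have hstep : ∀ i : Fin N,
      F.eval (((i : ℕ) + 1 : ℝ) / N) = F.eval (((i : ℕ) : ℝ) / N) := by
    intro i
    have h0 := h i
    rw [heval, heval, ← sub_eq_zero, ← Finset.sum_sub_distrib]
    rw [← h0]
    apply Finset.sum_congr rfl
    intro α _
    rw [mom]
    ring
  have hzero : ∀ k : ℕ, k ≤ N → F.eval ((k : ℝ) / N) = 0 := by
    intro k
    induction k with
    | zero => intro _; simp [heval]
    | succ k ih =>
      intro hk
      have hk' : k < N := hk
      have := hstep ⟨k, hk'⟩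
      simp only [Fin.val_mk] at this
      rw [show ((k + 1 : ℕ) : ℝ) = (k : ℝ) + 1 by push_cast; ring, this]
      exact ih hk'.le
  have hdeg : F.natDegree ≤ N := by
    apply Polynomial.natDegree_sum_le_of_forall_le
    intro α _
    apply le_trans (Polynomial.natDegree_C_mul_le _ _)
    rw [Polynomial.natDegree_X_pow]
    exact α.2
  have hFzero : F = 0 := by
    apply Polynomial.eq_zero_of_natDegree_lt_card_of_eval_eq_zero F
      (f := fun k : Fin (N + 1) => ((k : ℕ) : ℝ) / N)
    · intro a b hab
      have hN0 : (N : ℝ) ≠ 0 := by positivity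
      have h2 : ((a : ℕ) : ℝ) = ((b : ℕ) : ℝ) :=
        (div_left_inj' hN0).mp hab
      exact Fin.ext (Nat.cast_injective h2)
    · intro k
      exact hzero k (Nat.lt_succ_iff.mp k.2)
    · simpa using Nat.lt_succ_of_le hdeg
  funext α
  have hcoeff : F.coeff ((α : ℕ) + 1) = v α / ((α : ℕ) + 1) := by
    rw [hF, Polynomial.finset_sum_coeff]
    rw [Finset.sum_eq_single α]
    · simp
    · intro β _ hβ
      have hne2 : (α : ℕ) ≠ (β : ℕ) := fun hh => hβ (Fin.ext hh.symm)
      simp [Polynomial.coeff_X_pow, hne2]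
    · simp
  rw [hFzero] at hcoeff
  simp only [Polynomial.coeff_zero] at hcoeff
  have hne : ((α : ℕ) : ℝ) + 1 ≠ 0 := by positivity
  have := hcoeff.symm
  rw [div_eq_zero_iff] at this
  simpa [hne] using this

lemma block_integral (N : ℕ) (hN : 0 < N) (e : Matrix (Fin N) (Fin N) ℝ) (i j : ℕ) :
    (∫ z in (Set.Icc ((i : ℝ) / N) (((i : ℝ) + 1) / N)) ×ˢ
        (Set.Icc ((j : ℝ) / N) (((j : ℝ) + 1) / N)),
      ∑ α : Fin N, ∑ β : Fin N, e α β * z.1 ^ (α : ℕ) * z.2 ^ (β : ℕ))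
    = ∑ α : Fin N, ∑ β : Fin N, e α β * mom N i (α : ℕ) * mom N j (β : ℕ) := by
  have hint : ∀ (α β : Fin N), IntegrableOn
      (fun z : ℝ × ℝ => e α β * z.1 ^ (α : ℕ) * z.2 ^ (β : ℕ))
      ((Set.Icc ((i : ℝ) / N) (((i : ℝ) + 1) / N)) ×ˢ
        (Set.Icc ((j : ℝ) / N) (((j : ℝ) + 1) / N))) volume := by
    intro α β
    apply ContinuousOn.integrableOn_compact (isCompact_Icc.prod isCompact_Icc)
    apply Continuous.continuousOn
    fun_prop
  rw [MeasureTheory.integral_finset_sum]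
  · apply Finset.sum_congr rfl
    intro α _
    rw [MeasureTheory.integral_finset_sum]
    · apply Finset.sum_congr rfl
      intro β _
      have h1 : (fun z : ℝ × ℝ => e α β * z.1 ^ (α : ℕ) * z.2 ^ (β : ℕ))
          = fun z : ℝ × ℝ => (fun x : ℝ => e α β * x ^ (α : ℕ)) z.1 *
              (fun y : ℝ => y ^ (β : ℕ)) z.2 := rfl
      have h2 := MeasureTheory.setIntegral_prod_mul (μ := (volume : Measure ℝ))
        (ν := (volume : Measure ℝ)) (fun x : ℝ => e α β * x ^ (α : ℕ))
        (fun y : ℝ => y ^ (β : ℕ))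
        (Set.Icc ((i : ℝ) / N) (((i : ℝ) + 1) / N))
        (Set.Icc ((j : ℝ) / N) (((j : ℝ) + 1) / N))
      rw [h1, MeasureTheory.Measure.volume_eq_prod, h2,
        MeasureTheory.integral_const_mul, integral_pow_Icc N i α hN,
        integral_pow_Icc N j β hN]
    · intro β _
      exact hint α β
  · intro α _
    apply MeasureTheory.integrable_finset_sum
    intro β _
    exact hint α β

theorem block_average_uniqueness (n : ℕ)
    (c d : Matrix (Fin (2 ^ n)) (Fin (2 ^ n)) ℝ)
    (g gn : ℝ × ℝ → ℝ)
    (hgdef : ∀ z, g z =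
      ∑ α : Fin (2 ^ n), ∑ β : Fin (2 ^ n), d α β * z.1 ^ (α : ℕ) * z.2 ^ (β : ℕ))
    (hgndef : ∀ z, gn z =
      ∑ α : Fin (2 ^ n), ∑ β : Fin (2 ^ n), c α β * z.1 ^ (α : ℕ) * z.2 ^ (β : ℕ))
    (hblocks : ∀ i j : Fin (2 ^ n),
      (∫ z in (Set.Icc (((i : ℕ) : ℝ) / 2 ^ n) ((((i : ℕ) : ℝ) + 1) / 2 ^ n)) ×ˢ
              (Set.Icc (((j : ℕ) : ℝ) / 2 ^ n) ((((j : ℕ) : ℝ) + 1) / 2 ^ n)), gn z)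
        = ∫ z in (Set.Icc (((i : ℕ) : ℝ) / 2 ^ n) ((((i : ℕ) : ℝ) + 1) / 2 ^ n)) ×ˢ
                 (Set.Icc (((j : ℕ) : ℝ) / 2 ^ n) ((((j : ℕ) : ℝ) + 1) / 2 ^ n)), g z) :
    c = d := by
  have hN : 0 < 2 ^ n := Nat.pow_pos (by norm_num)
  have hNR : (((2 ^ n : ℕ) : ℝ)) = (2 : ℝ) ^ n := by push_cast; ring
  have key : ∀ i j : Fin (2 ^ n),
      ∑ α : Fin (2 ^ n), ∑ β : Fin (2 ^ n),
        (c α β - d α β) * mom (2 ^ n) (i : ℕ) (α : ℕ) * mom (2 ^ n) (j : ℕ) (β : ℕ) = 0 := by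
    intro i j
    have hc := block_integral (2 ^ n) hN c i j
    have hd := block_integral (2 ^ n) hN d i j
    have hb := hblocks i j
    rw [show (2 : ℝ) ^ n = (((2 ^ n : ℕ) : ℝ)) from hNR.symm] at hb
    have hgn : (∫ z in (Set.Icc (((i : ℕ) : ℝ) / ((2 ^ n : ℕ) : ℝ))
          ((((i : ℕ) : ℝ) + 1) / ((2 ^ n : ℕ) : ℝ))) ×ˢ
        (Set.Icc (((j : ℕ) : ℝ) / ((2 ^ n : ℕ) : ℝ))
          ((((j : ℕ) : ℝ) + 1) / ((2 ^ n : ℕ) : ℝ))), gn z)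
        = ∑ α : Fin (2 ^ n), ∑ β : Fin (2 ^ n),
            c α β * mom (2 ^ n) (i : ℕ) (α : ℕ) * mom (2 ^ n) (j : ℕ) (β : ℕ) := by
      rw [← hc]
      apply MeasureTheory.setIntegral_congr_fun (measurableSet_Icc.prod measurableSet_Icc)
      intro z _
      simpa using hgndef z
    have hg : (∫ z in (Set.Icc (((i : ℕ) : ℝ) / ((2 ^ n : ℕ) : ℝ))
          ((((i : ℕ) : ℝ) + 1) / ((2 ^ n : ℕ) : ℝ))) ×ˢ
        (Set.Icc (((j : ℕ) : ℝ) / ((2 ^ n : ℕ) : ℝ))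
          ((((j : ℕ) : ℝ) + 1) / ((2 ^ n : ℕ) : ℝ))), g z)
        = ∑ α : Fin (2 ^ n), ∑ β : Fin (2 ^ n),
            d α β * mom (2 ^ n) (i : ℕ) (α : ℕ) * mom (2 ^ n) (j : ℕ) (β : ℕ) := by
      rw [← hd]
      apply MeasureTheory.setIntegral_congr_fun (measurableSet_Icc.prod measurableSet_Icc)
      intro z _
      simpa using hgdef z
    rw [hgn, hg] at hb
    rw [← sub_eq_zero] at hb
    rw [← hb, ← Finset.sum_sub_distrib]
    apply Finset.sum_congr rfl
    intro α _
    rw [← Finset.sum_sub_distrib]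
    apply Finset.sum_congr rfl
    intro β _
    ring
  have hrow : ∀ α : Fin (2 ^ n), ∀ j : Fin (2 ^ n),
      ∑ β : Fin (2 ^ n), (c α β - d α β) * mom (2 ^ n) (j : ℕ) (β : ℕ) = 0 := by
    intro α j
    have hv : (fun α : Fin (2 ^ n) =>
        ∑ β : Fin (2 ^ n), (c α β - d α β) * mom (2 ^ n) (j : ℕ) (β : ℕ)) = 0 := by
      apply moment_inj (2 ^ n) hN
      intro i
      rw [← key i j]
      apply Finset.sum_congr rfl
      intro a _
      rw [Finset.sum_mul]
      apply Finset.sum_congr rfl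
      intro b _
      ring
    exact congrFun hv α
  funext α β
  have hv : (fun β : Fin (2 ^ n) => c α β - d α β) = 0 := by
    apply moment_inj (2 ^ n) hN
    intro j
    exact hrow α j
  have := congrFun hv β
  simpa [sub_eq_zero] using this
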